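/- Let p: (Q̂,Î) → (Q,I) be a covering morphism of bound quivers, let x be a vertex of Q, and let w₁, w₂ be two paths with source x. Let x̂ ∈ p⁻¹(x), and let ŵ₁, ŵ₂ be paths with source x̂ such that p(ŵᵢ) = wᵢ for i = 1,2. Then w₁ ∼∘ w₂ if and only if ŵ₁ ∼∘ ŵ₂, where ∼∘ denotes natural homotopy. -/

import Mathlib

open Quiver CategoryTheory

namespace BoundQuiver

variable (k : Type) [Field k] {V : Type} [Quiver.{0} V]

/-- `k`-linear combinations of parallel paths from `a` to `b`: the space `kQ(a,b)`. -/
abbrev PathVec (a b : V) := Quiver.Path a b →₀ k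

variable {k}

/-- Concatenation of paths, extended bilinearly to linear combinations of paths.
This is the multiplication of the path algebra `kQ`. -/
noncomputable def pathVecComp {a b c : V} (f : PathVec k a b) (g : PathVec k b c) :
    PathVec k a c :=
  f.sum fun p cp => g.sum fun q cq => Finsupp.single (p.comp q) (cp * cq)

variable (k) (V) in
/-- A two-sided ideal of the path algebra `kQ`, presented as a family of subspaces
`I(a,b) ⊆ kQ(a,b)` which is stable under left and right concatenation with paths. -/
structure PathIdeal where
  I : ∀ a b : V, Submodule k (PathVec k a b)
  comp_single_left : ∀ {a b c : V} (p : Quiver.Path a b) {ρ : PathVec k b c},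
    ρ ∈ I b c → pathVecComp (Finsupp.single p 1) ρ ∈ I a c
  comp_single_right : ∀ {a b c : V} (q : Quiver.Path b c) {ρ : PathVec k a b},
    ρ ∈ I a b → pathVecComp ρ (Finsupp.single q 1) ∈ I a c

/-- A path lies in the ideal `J`. -/
def PathIdeal.memP (J : PathIdeal k V) {a b : V} (p : Quiver.Path a b) : Prop :=
  Finsupp.single p (1 : k) ∈ J.I a b

/-- `J` is an admissible ideal: `F^m ⊆ J ⊆ F²` for some `m ≥ 2`, where `F` is the
ideal generated by the arrows. -/
def PathIdeal.IsAdmissible (J : PathIdeal k V) : Prop :=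
  (∃ m : ℕ, 2 ≤ m ∧ ∀ {a b : V} (p : Quiver.Path a b), m ≤ p.length → J.memP p) ∧
    ∀ {a b : V}, ∀ ρ ∈ J.I a b, ∀ p ∈ ρ.support, 2 ≤ (p : Quiver.Path a b).length

/-- The restriction `∑_{p ∈ s} λ_p p` of a linear combination of paths to a subset `s`
of its support. -/
noncomputable def restrictVec {a b : V} (ρ : PathVec k a b) (s : Finset (Quiver.Path a b)) :
    PathVec k a b :=
  ∑ p ∈ s, Finsupp.single p (ρ p)

/-- A relation `ρ = ∑ λ_i w_i ∈ I(a,b)` is minimal if it has at least two terms and no proper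
nonempty subsum lies in the ideal. -/
structure IsMinimalRelation (J : PathIdeal k V) {a b : V} (ρ : PathVec k a b) : Prop where
  mem : ρ ∈ J.I a b
  two_le_card : 2 ≤ ρ.support.card
  minimal : ∀ s : Finset (Quiver.Path a b), s ⊆ ρ.support → s.Nonempty → s ≠ ρ.support →
    restrictVec ρ s ∉ J.I a b

/-- The natural homotopy relation `∼∘` on parallel paths: the smallest equivalence relation
identifying any two paths appearing in a common minimal relation, and compatible with
concatenation. -/
inductive NatHomotopic (J : PathIdeal k V) : ∀ {a b : V}, Quiver.Path a b → Quiver.Path a b → Prop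
  | minrel {a b : V} {ρ : PathVec k a b} (hρ : IsMinimalRelation J ρ)
      {p q : Quiver.Path a b} (hp : p ∈ ρ.support) (hq : q ∈ ρ.support) : NatHomotopic J p q
  | comp {a b c d : V} (w : Quiver.Path a b) {p q : Quiver.Path b c} (w' : Quiver.Path c d) :
      NatHomotopic J p q → NatHomotopic J ((w.comp p).comp w') ((w.comp q).comp w')
  | refl {a b : V} (p : Quiver.Path a b) : NatHomotopic J p p
  | symm {a b : V} {p q : Quiver.Path a b} : NatHomotopic J p q → NatHomotopic J q p
  | trans {a b : V} {p q r : Quiver.Path a b} :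
      NatHomotopic J p q → NatHomotopic J q r → NatHomotopic J p r

/-- Natural homotopy, as a relation on paths with arbitrary (not necessarily
definitionally equal) endpoints. -/
def NatHomotopicS (J : PathIdeal k V) (s t : Σ a b : V, Quiver.Path a b) : Prop :=
  ∃ (h₁ : s.1 = t.1) (h₂ : s.2.1 = t.2.1),
    NatHomotopic J (cast (congrArg₂ (fun a b => Quiver.Path a b) h₁ h₂) s.2.2) t.2.2

/-- A walk in `Q`, i.e. a path in the symmetrification of `Q`. -/
abbrev Walk (a b : V) := Quiver.Path (Quiver.Symmetrify.of.obj a) (Quiver.Symmetrify.of.obj b)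

/-- A path, viewed as a walk. -/
abbrev toWalk {a b : V} (p : Quiver.Path a b) : Walk a b :=
  Quiver.Symmetrify.of.mapPath p

/-- The homotopy relation `∼` on walks: the smallest equivalence relation which cancels
`α α⁻¹`, identifies parallel paths appearing in a common minimal relation, and is compatible
with concatenation of walks. -/
inductive WalkHomotopic (J : PathIdeal k V) :
    ∀ {a b : Quiver.Symmetrify V}, Quiver.Path a b → Quiver.Path a b → Prop
  | cancel {a b : Quiver.Symmetrify V} (f : a ⟶ b) :
      WalkHomotopic J (f.toPath.comp (Quiver.reverse f).toPath) Quiver.Path.nil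
  | minrel {a b : V} {ρ : PathVec k a b} (hρ : IsMinimalRelation J ρ)
      {p q : Quiver.Path a b} (hp : p ∈ ρ.support) (hq : q ∈ ρ.support) :
      WalkHomotopic J (toWalk p) (toWalk q)
  | comp {a b c d : Quiver.Symmetrify V} (w : Quiver.Path a b) {p q : Quiver.Path b c}
      (w' : Quiver.Path c d) : WalkHomotopic J p q →
      WalkHomotopic J ((w.comp p).comp w') ((w.comp q).comp w')
  | refl {a b : Quiver.Symmetrify V} (p : Quiver.Path a b) : WalkHomotopic J p p
  | symm {a b : Quiver.Symmetrify V} {p q : Quiver.Path a b} :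
      WalkHomotopic J p q → WalkHomotopic J q p
  | trans {a b : Quiver.Symmetrify V} {p q r : Quiver.Path a b} :
      WalkHomotopic J p q → WalkHomotopic J q r → WalkHomotopic J p r

namespace WalkHomotopic

variable {J : PathIdeal k V}

lemma comp_right {a b c : Quiver.Symmetrify V} {p q : Quiver.Path a b} (h : WalkHomotopic J p q)
    (r : Quiver.Path b c) : WalkHomotopic J (p.comp r) (q.comp r) := by
  have := WalkHomotopic.comp Quiver.Path.nil r h
  simpa using this

lemma comp_left {a b c : Quiver.Symmetrify V} (r : Quiver.Path a b) {p q : Quiver.Path b c}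
    (h : WalkHomotopic J p q) : WalkHomotopic J (r.comp p) (r.comp q) := by
  have := WalkHomotopic.comp r Quiver.Path.nil h
  simpa using this

lemma congr {a b c : Quiver.Symmetrify V} {p p' : Quiver.Path a b} {q q' : Quiver.Path b c}
    (h : WalkHomotopic J p p') (h' : WalkHomotopic J q q') :
    WalkHomotopic J (p.comp q) (p'.comp q') :=
  (h.comp_right q).trans (comp_left p' h')

lemma comp_reverse {a b : Quiver.Symmetrify V} (p : Quiver.Path a b) :
    WalkHomotopic J (p.comp p.reverse) Quiver.Path.nil := by
  induction p with
  | nil => exact WalkHomotopic.refl _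
  | cons p f ih =>
    rename_i b'
    have h1 : ((p.cons f).comp (p.cons f).reverse)
        = (p.comp (f.toPath.comp (Quiver.reverse f).toPath)).comp p.reverse := by
      show ((p.comp f.toPath).comp ((Quiver.reverse f).toPath.comp p.reverse)) = _
      rw [← Quiver.Path.comp_assoc, ← Quiver.Path.comp_assoc]
    rw [h1]
    have h2 := WalkHomotopic.comp p p.reverse (WalkHomotopic.cancel (J := J) f)
    simpa using h2.trans ih

lemma reverse_comp {a b : Quiver.Symmetrify V} (p : Quiver.Path a b) :
    WalkHomotopic J (p.reverse.comp p) Quiver.Path.nil := by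
  have := comp_reverse (J := J) p.reverse
  rwa [Quiver.Path.reverse_reverse] at this

lemma reverse_mono {a b : Quiver.Symmetrify V} {p q : Quiver.Path a b}
    (h : WalkHomotopic J p q) : WalkHomotopic J p.reverse q.reverse := by
  have h1 : WalkHomotopic J p.reverse ((p.reverse.comp q).comp q.reverse) := by
    have := (comp_left p.reverse (comp_reverse (J := J) q)).symm
    simpa [← Quiver.Path.comp_assoc] using this
  have h2 : WalkHomotopic J ((p.reverse.comp q).comp q.reverse)
      ((p.reverse.comp p).comp q.reverse) :=
    comp_right (comp_left p.reverse h.symm) q.reverse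
  have h3 : WalkHomotopic J ((p.reverse.comp p).comp q.reverse) q.reverse := by
    have := comp_right (reverse_comp (J := J) p) q.reverse
    simpa using this
  exact (h1.trans h2).trans h3

end WalkHomotopic

/-- The setoid of walks from `a` to `b`, up to homotopy. -/
def walkSetoid (J : PathIdeal k V) (a b : V) :
    Setoid (Quiver.Path (Quiver.Symmetrify.of.obj a) (Quiver.Symmetrify.of.obj b)) :=
  ⟨WalkHomotopic J, ⟨WalkHomotopic.refl, WalkHomotopic.symm, WalkHomotopic.trans⟩⟩

/-- The fundamental group `π₁(Q, I)` of a bound quiver at the base point `x₀`: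
homotopy classes of closed walks at `x₀` (i.e. `π₁(Q,x₀)/N(Q,I,x₀)`). -/
def piOne (J : PathIdeal k V) (x₀ : V) : Type :=
  Quotient (walkSetoid J x₀ x₀)

noncomputable instance (J : PathIdeal k V) (x₀ : V) : Group (piOne J x₀) where
  mul := Quotient.map₂ Quiver.Path.comp fun _ _ h _ _ h' => h.congr h'
  one := Quotient.mk _ Quiver.Path.nil
  inv := Quotient.map Quiver.Path.reverse fun _ _ h => h.reverse_mono
  mul_assoc := by
    rintro ⟨a⟩ ⟨b⟩ ⟨c⟩
    exact congrArg (Quotient.mk _) (Quiver.Path.comp_assoc ..)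
  one_mul := by
    rintro ⟨a⟩
    exact congrArg (Quotient.mk _) (Quiver.Path.nil_comp a)
  mul_one := by
    rintro ⟨a⟩
    exact congrArg (Quotient.mk _) (Quiver.Path.comp_nil a)
  inv_mul_cancel := by
    rintro ⟨a⟩
    exact Quotient.sound (WalkHomotopic.reverse_comp a)

/-- The quiver `Q` is connected (as an undirected graph). -/
def QuiverConnected (W : Type) [Quiver.{0} W] : Prop :=
  ∀ a b : W, Nonempty (Walk a b)

/-- The quiver `Q` is triangular, i.e. has no oriented cycles. -/
def Triangular (W : Type) [Quiver.{0} W] : Prop :=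
  ∀ (a : W) (p : Quiver.Path a a), p.length = 0

end BoundQuiver
section Classifying

open CategoryTheory

namespace BoundQuiver

variable {k : Type} [Field k] {V : Type} [Quiver.{0} V]

/-- The length of a path (helper forcing elaboration at the level of the quiver `V`). -/
def pathLen {a b : V} (p : Quiver.Path a b) : ℕ := p.length

/-- The natural homotopy relation, as a relation on the hom-sets of the path category. -/
def natHomRel (J : PathIdeal k V) : HomRel (Paths V) :=
  fun _ _ p q => NatHomotopic J p q

/-- The homotopy relation on paths, as a relation on the hom-sets of the path category. -/
def walkHomRel (J : PathIdeal k V) : HomRel (Paths V) :=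
  fun _ _ p q => WalkHomotopic J (toWalk p) (toWalk q)

variable (J : PathIdeal k V) (r : HomRel (Paths V))

/-- A chain of composable paths, all of whose segments avoid the ideal `J`
("chains with non-zero composite"). -/
def NonzeroChain {n : ℕ} (F : ComposableArrows (Paths V) n) : Prop :=
  ∀ (i j : Fin (n + 1)) (f : i ⟶ j), ¬ J.memP (F.map f)

/-- A chain all of whose segments have length at most one (i.e. a chain in the underlying
graph of the quiver). -/
def GraphChain {n : ℕ} (F : ComposableArrows (Paths V) n) : Prop :=
  ∀ (i j : Fin (n + 1)) (f : i ⟶ j), pathLen (F.map f) ≤ 1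

/-- The simplicial set whose geometric realization is the classifying space of the
bound quiver: an `n`-simplex is a chain of `n` composable morphisms in the quotient
of the path category by the relation `r` which admits a lift to a chain of paths whose
segments are not in `J`. -/
noncomputable def BSSet : SSet where
  obj Δ := {G : ComposableArrows (CategoryTheory.Quotient r) (Δ.unop.len) //
      ∃ F : ComposableArrows (Paths V) (Δ.unop.len),
        NonzeroChain J F ∧ F ⋙ CategoryTheory.Quotient.functor r = G}
  map f := TypeCat.ofHom fun x => ⟨(nerve (CategoryTheory.Quotient r)).map f x.val, by
      obtain ⟨F, hF, hFG⟩ := x.2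
      refine ⟨(nerve (Paths V)).map f F, fun i j g => hF _ _ _, ?_⟩
      rw [← hFG]; rfl⟩
  map_id Δ := by
    ext x
    exact congrArg (fun g => g x.val) ((nerve (CategoryTheory.Quotient r)).map_id Δ)
  map_comp f g := by
    ext x
    exact congrArg (fun h => h x.val) ((nerve (CategoryTheory.Quotient r)).map_comp f g)

/-- The geometric realization of `BSSet J r`. For `r` the natural homotopy relation this
is the classifying space `B(Q,I)`; for `r` the homotopy relation it is the total
classifying space `B^♯(Q,I)`. -/
noncomputable def BSpace : TopCat :=
  SSet.toTop.obj (BSSet J r)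

/-- The classifying space `B(Q,I)` of the bound quiver `(Q,I)`. -/
noncomputable abbrev ClassifyingSpace (J : PathIdeal k V) : TopCat :=
  BSpace J (natHomRel J)

/-- The total classifying space `B^♯(Q,I)` of the bound quiver `(Q,I)`. -/
noncomputable abbrev TotalClassifyingSpace (J : PathIdeal k V) : TopCat :=
  BSpace J (walkHomRel J)

/-- The sub-simplicial set of `BSSet` corresponding to the underlying graph `Q̄` of `Q`
(the `1`-skeleton given by vertices and arrows). -/
noncomputable def GraphSSet : SSet where
  obj Δ := {G : ComposableArrows (CategoryTheory.Quotient r) (Δ.unop.len) //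
      ∃ F : ComposableArrows (Paths V) (Δ.unop.len),
        NonzeroChain J F ∧ GraphChain F ∧ F ⋙ CategoryTheory.Quotient.functor r = G}
  map f := TypeCat.ofHom fun x => ⟨(nerve (CategoryTheory.Quotient r)).map f x.val, by
      obtain ⟨F, hF, hlen, hFG⟩ := x.2
      refine ⟨(nerve (Paths V)).map f F, fun i j g => hF _ _ _,
        fun i j g => hlen _ _ _, ?_⟩
      rw [← hFG]; rfl⟩
  map_id Δ := by
    ext x
    exact congrArg (fun g => g x.val) ((nerve (CategoryTheory.Quotient r)).map_id Δ)
  map_comp f g := by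
    ext x
    exact congrArg (fun h => h x.val) ((nerve (CategoryTheory.Quotient r)).map_comp f g)

/-- The inclusion of the underlying graph into the classifying space, at the simplicial
level. -/
noncomputable def graphInclusion : GraphSSet J r ⟶ BSSet J r where
  app Δ := TypeCat.ofHom fun x => ⟨x.val, by obtain ⟨F, h1, _, h3⟩ := x.2; exact ⟨F, h1, h3⟩⟩
  naturality Δ Δ' f := by
    ext x
    apply Subtype.ext
    rfl

/-- The underlying graph `Q̄`, viewed as a subspace of the classifying space. -/
noncomputable def graphSubspace : Set (BSpace J r) :=
  Set.range (SSet.toTop.map (graphInclusion J r))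

/-- `A` is a deformation retract of `X`: there is a retraction of `X` onto `A` which is
homotopic to the identity of `X`. -/
def IsDeformationRetract {X : Type*} [TopologicalSpace X] (A : Set X) : Prop :=
  ∃ retr : ContinuousMap X X, Set.range retr ⊆ A ∧ (∀ a ∈ A, retr a = a) ∧
    Nonempty ((ContinuousMap.id X).Homotopy retr)

/-- The ideal `J` is monomial: every path occurring in the support of an element of `J`
already lies in `J` (equivalently, `J` is generated by paths). -/
def PathIdeal.IsMonomial (J : PathIdeal k V) : Prop :=
  ∀ {a b : V}, ∀ ρ ∈ J.I a b, ∀ p ∈ ρ.support, J.memP (p : Quiver.Path a b)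

/-- The algebra `kQ/J` is almost triangular: if there is a nontrivial path from `x` to `y`
avoiding `J` then all nontrivial paths from `y` to `x` lie in `J`. -/
def AlmostTriangular (J : PathIdeal k V) : Prop :=
  ∀ x y : V, (∃ p : Quiver.Path x y, 0 < p.length ∧ ¬ J.memP p) →
    ∀ q : Quiver.Path y x, 0 < q.length → J.memP q

section Cells

/-- A chain in the quotient category is nondegenerate if none of its elementary arrows is
an identity. -/
def CellNondegenerate {n : ℕ} (G : ComposableArrows (CategoryTheory.Quotient r) n) : Prop :=
  ∀ i : Fin n, ¬ ∃ h : G.obj i.castSucc = G.obj i.succ,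
    G.map (homOfLE (Fin.castSucc_le_succ i)) = eqToHom h

/-- `G` is an `n`-cell of the classifying space. -/
def IsCell {n : ℕ} (G : ComposableArrows (CategoryTheory.Quotient r) n) : Prop :=
  (∃ F : ComposableArrows (Paths V) n,
      NonzeroChain J F ∧ F ⋙ CategoryTheory.Quotient.functor r = G) ∧
    CellNondegenerate r G

/-- The set of `n`-cells of the classifying space. -/
def Cell (n : ℕ) : Type :=
  {G : ComposableArrows (CategoryTheory.Quotient r) n // IsCell J r G}

/-- `x` is a boundary point (i.e. a vertex) of the cell `c`. -/
def Cell.hasVertex {J' : PathIdeal k V} {r' : HomRel (Paths V)} {n : ℕ}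
    (c : Cell J' r' n) (x : V) : Prop :=
  ∃ j : Fin (n + 1), (c.val.obj j).as = (Paths.of V).obj x

/-- The `i`-th face of a chain. -/
noncomputable def cellFace {n : ℕ} (i : Fin (n + 2))
    (G : ComposableArrows (CategoryTheory.Quotient r) (n + 1)) :
    ComposableArrows (CategoryTheory.Quotient r) n :=
  G.whiskerLeft (Fin.succAboveOrderEmb i).monotone.functor

/-- Projection of an arbitrary chain to the free abelian group on cells, sending chains
which are not cells to `0`. -/
noncomputable def cellProj (n : ℕ) (G : ComposableArrows (CategoryTheory.Quotient r) n) :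
    Cell J r n →₀ ℤ :=
  letI := Classical.propDecidable
  if h : IsCell J r G then Finsupp.single ⟨G, h⟩ 1 else 0

/-- The boundary operator of the cellular chain complex `C_•(B)`: the alternating sum of
the faces. -/
noncomputable def cellBoundary (n : ℕ) : (Cell J r (n + 1) →₀ ℤ) →+ (Cell J r n →₀ ℤ) :=
  Finsupp.liftAddHom fun c => zmultiplesHom _
    (∑ i : Fin (n + 2), (-1 : ℤ) ^ (i : ℕ) • cellProj J r n (cellFace r i c.val))

/-- The cellular homology groups `H_i(B)` of the classifying space. -/
noncomputable def cellHomology : ℕ → Type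
  | 0 => (Cell J r 0 →₀ ℤ) ⧸ (cellBoundary J r 0).range
  | (n + 1) => (cellBoundary J r n).ker ⧸
      ((cellBoundary J r (n + 1)).range.addSubgroupOf (cellBoundary J r n).ker)

noncomputable instance (i : ℕ) : AddCommGroup (cellHomology J r i) := by
  cases i <;> (dsimp [cellHomology]; infer_instance)

/-- Precomposition with an additive map, as an additive map on hom groups. -/
def precompHom {A B G : Type*} [AddCommGroup A] [AddCommGroup B] [AddCommGroup G]
    (d : A →+ B) : (B →+ G) →+ (A →+ G) where
  toFun f := f.comp d
  map_zero' := rfl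
  map_add' f g := rfl

/-- The cellular cohomology groups `H^i(B, G)` of the classifying space with coefficients
in an abelian group `G`. -/
noncomputable def cellCohomology (G : Type) [AddCommGroup G] : ℕ → Type
  | 0 => (precompHom (G := G) (cellBoundary J r 0)).ker
  | (n + 1) => (precompHom (G := G) (cellBoundary J r (n + 1))).ker ⧸
      ((precompHom (G := G) (cellBoundary J r n)).range.addSubgroupOf
        (precompHom (G := G) (cellBoundary J r (n + 1))).ker)

noncomputable instance (G : Type) [AddCommGroup G] (i : ℕ) :
    AddCommGroup (cellCohomology J r G i) := by
  cases i <;> (dsimp [cellCohomology]; infer_instance)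

end Cells

end BoundQuiver

end Classifying
section Algebras

open CategoryTheory TensorProduct

namespace BoundQuiver

variable (k : Type) [Field k] (A : Type) [Ring A] [Algebra k A]
variable (V : Type) [Quiver.{0} V] [Fintype V]

/-- A presentation `A ≅ kQ/I` of the algebra `A` by the bound quiver `(Q,I)`: the data of
the images in `A` of the paths of `Q`, multiplicativity, orthogonality of the stationary
idempotents, surjectivity, together with the (admissible) kernel ideal `I`. -/
structure Presentation where
  pathMap : ∀ {a b : V}, Quiver.Path a b → A
  map_comp : ∀ {a b c : V} (p : Quiver.Path a b) (q : Quiver.Path b c),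
    pathMap (p.comp q) = pathMap p * pathMap q
  orth : ∀ {a b c d : V} (p : Quiver.Path a b) (q : Quiver.Path c d),
    b ≠ c → pathMap p * pathMap q = 0
  sum_idem : ∑ x : V, pathMap (Quiver.Path.nil : Quiver.Path x x) = 1
  spans : Submodule.span k
    (Set.range fun s : Σ a b : V, Quiver.Path a b => pathMap s.2.2) = ⊤
  toIdeal : PathIdeal k V
  mem_toIdeal_iff : ∀ {a b : V} (ρ : PathVec k a b),
    ρ ∈ toIdeal.I a b ↔ ρ.sum (fun p c => c • pathMap p) = 0
  admissible : toIdeal.IsAdmissible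

variable {k A V}
variable (P : Presentation k A V)

/-- The primitive idempotent `e_x` of `A` attached to the vertex `x`. -/
noncomputable def Presentation.idem (x : V) : A :=
  P.pathMap (Quiver.Path.nil : Quiver.Path x x)

/-- The corner space `e_x A e_y` of the algebra. -/
noncomputable def Presentation.corner (x y : V) : Submodule k A :=
  LinearMap.range ((LinearMap.mulLeft k (P.idem x)).comp (LinearMap.mulRight k (P.idem y)))

/-- `A` is schurian: `dim_k e_x A e_y ≤ 1` for all vertices. -/
noncomputable def Presentation.Schurian : Prop :=
  ∀ x y : V, Module.finrank k (P.corner x y) ≤ 1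

/-- `A` is constricted: `dim_k e_x A e_y = 1` for every arrow `x ⟶ y`. -/
noncomputable def Presentation.Constricted : Prop :=
  ∀ {x y : V}, (x ⟶ y) → Module.finrank k (P.corner x y) = 1

/-- `A` is semi-commutative: for parallel paths `w, w'`, one has `w ∈ I` iff `w' ∈ I`. -/
def Presentation.SemiCommutative : Prop :=
  ∀ {x y : V} (p q : Quiver.Path x y), P.toIdeal.memP p ↔ P.toIdeal.memP q

/-- A semi-normed basis of `A`: a family of bases `B_{xy}` of the corner spaces
`e_x A e_y` containing the idempotents and the arrows, and such that the product of two
basis vectors is a scalar multiple of a basis vector whenever it is non-zero. -/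
structure SemiNormedBasis where
  B : V → V → Set A
  subset_corner : ∀ x y : V, B x y ⊆ (P.corner x y : Set A)
  indep : ∀ x y : V, LinearIndependent k ((↑) : B x y → A)
  span_corner : ∀ x y : V, Submodule.span k (B x y) = P.corner x y
  idem_mem : ∀ x : V, P.idem x ∈ B x x
  arrow_mem : ∀ {x y : V} (f : x ⟶ y), P.pathMap f.toPath ∈ B x y
  mul_mem : ∀ {x y z : V}, ∀ σ ∈ B x y, ∀ σ' ∈ B y z,
    σ * σ' = 0 ∨ ∃ (lam : k) (b : A), b ∈ B x z ∧ σ * σ' = lam • b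

variable (S : SemiNormedBasis P)

/-- Validity condition for the basis elements of the simplicial chain group `SC_n(A)`:
a tuple of non-stationary basis vectors with non-zero product. -/
def SCValid {n : ℕ} (t : (Fin (n + 1) → V) × (Fin n → A)) : Prop :=
  (∀ i : Fin n, t.2 i ∈ S.B (t.1 i.castSucc) (t.1 i.succ)) ∧
    (∀ (i : Fin n) (j : V), t.2 i ≠ P.idem j) ∧
    ((List.ofFn t.2).prod ≠ 0 ∨ n = 0)

/-- The canonical basis of the simplicial chain group `SC_n(A)`. -/
def SCBasis (n : ℕ) : Type :=
  {t : (Fin (n + 1) → V) × (Fin n → A) // SCValid P S t}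

/-- The simplicial chain group `SC_n(A)`: the free abelian group on `SCBasis`. -/
def SCgroup (n : ℕ) : Type := SCBasis P S n →₀ ℤ

noncomputable instance (n : ℕ) : AddCommGroup (SCgroup P S n) :=
  inferInstanceAs (AddCommGroup (SCBasis P S n →₀ ℤ))

/-- A choice of the basis vector `b(σ, σ')` with `σσ' = λ ⬝ b(σ, σ')`. -/
noncomputable def bChoice (x y : A) : A :=
  letI := Classical.propDecidable
  if h : ∃ p : k × A, (∃ i j : V, p.2 ∈ S.B i j) ∧ x * y = p.1 • p.2 then h.choose.2 else 0

/-- Face deleting the first entry of a tuple. -/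
def rawHead {n : ℕ} (t : (Fin (n + 2) → V) × (Fin (n + 1) → A)) :
    (Fin (n + 1) → V) × (Fin n → A) :=
  (t.1 ∘ Fin.succ, t.2 ∘ Fin.succ)

/-- Face deleting the last entry of a tuple. -/
def rawLast {n : ℕ} (t : (Fin (n + 2) → V) × (Fin (n + 1) → A)) :
    (Fin (n + 1) → V) × (Fin n → A) :=
  (t.1 ∘ Fin.castSucc, t.2 ∘ Fin.castSucc)

/-- Inner face composing the `j`-th and `(j+1)`-st entries of a tuple. -/
noncomputable def rawMid {n : ℕ} (j : Fin n) (t : (Fin (n + 2) → V) × (Fin (n + 1) → A)) :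
    (Fin (n + 1) → V) × (Fin n → A) :=
  (t.1 ∘ Fin.succAbove j.succ.castSucc, fun i =>
    if (i : ℕ) < (j : ℕ) then t.2 i.castSucc
    else if (i : ℕ) = (j : ℕ) then bChoice P S (t.2 j.castSucc) (t.2 j.succ)
    else t.2 i.succ)

/-- Projection onto the free abelian group on valid tuples. -/
noncomputable def SCproj (n : ℕ) (t : (Fin (n + 1) → V) × (Fin n → A)) : SCgroup P S n :=
  letI := Classical.propDecidable
  if h : SCValid P S t then Finsupp.single ⟨t, h⟩ 1 else 0

/-- The differential of the simplicial chain complex `SC_•(A)`. -/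
noncomputable def SCboundary (n : ℕ) : SCgroup P S (n + 1) →+ SCgroup P S n :=
  Finsupp.liftAddHom fun t => zmultiplesHom _
    (SCproj P S n (rawHead t.val)
      + (∑ j : Fin n, (-1 : ℤ) ^ ((j : ℕ) + 1) • SCproj P S n (rawMid P S j t.val))
      + (-1 : ℤ) ^ (n + 1) • SCproj P S n (rawLast t.val))

/-- The simplicial homology groups `SH_i(A)` of the algebra `A` (with respect to the
semi-normed basis `S`). -/
noncomputable def SH : ℕ → Type
  | 0 => SCgroup P S 0 ⧸ (SCboundary P S 0).range
  | (n + 1) => (SCboundary P S n).ker ⧸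
      ((SCboundary P S (n + 1)).range.addSubgroupOf (SCboundary P S n).ker)

noncomputable instance (i : ℕ) : AddCommGroup (SH P S i) := by
  cases i <;> (dsimp [SH]; infer_instance)

/-- The simplicial cohomology groups `SH^i(A, G)` of the algebra `A` with coefficients in
an abelian group `G` (with respect to the semi-normed basis `S`). -/
noncomputable def SHco (G : Type) [AddCommGroup G] : ℕ → Type
  | 0 => (precompHom (G := G) (SCboundary P S 0)).ker
  | (n + 1) => (precompHom (G := G) (SCboundary P S (n + 1))).ker ⧸
      ((precompHom (G := G) (SCboundary P S n)).range.addSubgroupOf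
        (precompHom (G := G) (SCboundary P S (n + 1))).ker)

noncomputable instance (G : Type) [AddCommGroup G] (i : ℕ) :
    AddCommGroup (SHco P S G i) := by
  cases i <;> (dsimp [SHco]; infer_instance)

variable (k) (A) in
/-- The Hochschild cohomology `HH^n(A) = Ext^n_{A^e}(A, A)` of `A`, where
`A^e = A ⊗_k Aᵐᵒᵖ` is the enveloping algebra. -/
noncomputable def HochschildCohomology (n : ℕ) : ModuleCat k :=
  letI : Module (A ⊗[k] Aᵐᵒᵖ) A := TensorProduct.Algebra.module
  ((Ext k (ModuleCat (A ⊗[k] Aᵐᵒᵖ)) n).obj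
    (Opposite.op (ModuleCat.of (A ⊗[k] Aᵐᵒᵖ) A))).obj (ModuleCat.of (A ⊗[k] Aᵐᵒᵖ) A)

end BoundQuiver

end Algebras
section Coverings

open CategoryTheory

namespace BoundQuiver

variable {k : Type} [Field k] {V : Type} [Quiver.{0} V]

/-- The type of arrows of the quiver `V`. -/
abbrev ArrowSig (V : Type) [Quiver.{0} V] : Type := Σ x y : V, x ⟶ y

/-- The word in the free group on the arrows associated to a path. -/
def wordOfPath : ∀ {a b : V}, Quiver.Path a b → FreeGroup (ArrowSig V)
  | _, _, Quiver.Path.nil => 1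
  | _, _, Quiver.Path.cons p f => wordOfPath p * FreeGroup.of ⟨_, _, f⟩

/-- The arrow of the symmetrified quiver `f` lies (after forgetting its orientation) in the
set of arrows `T`. -/
def symInSet (T : Set (ArrowSig V)) :
    ∀ {a b : Quiver.Symmetrify V}, (a ⟶ b) → Prop :=
  fun {a b} f => match f with
    | Sum.inl g => (⟨a, b, g⟩ : ArrowSig V) ∈ T
    | Sum.inr g => (⟨b, a, g⟩ : ArrowSig V) ∈ T

/-- All arrows of the walk `w` lie in `T`. -/
def walkIn (T : Set (ArrowSig V)) :
    ∀ {a b : Quiver.Symmetrify V}, Quiver.Path a b → Prop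
  | _, _, Quiver.Path.nil => True
  | _, _, Quiver.Path.cons p f => walkIn T p ∧ symInSet T f

/-- A walk is reduced if it contains no immediate backtracking `f f⁻¹`. -/
def ReducedWalk {a b : Quiver.Symmetrify V} (w : Quiver.Path a b) : Prop :=
  ¬ ∃ (c d : Quiver.Symmetrify V) (u : Quiver.Path a c) (f : c ⟶ d)
      (v : Quiver.Path c b),
      w = ((u.comp f.toPath).comp (Quiver.reverse f).toPath).comp v

/-- The set of arrows `T` spans an acyclic subgraph of the underlying graph of `Q`:
there are no nontrivial reduced closed walks using only arrows of `T`. -/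
def AcyclicArrowSet (T : Set (ArrowSig V)) : Prop :=
  ∀ (a : Quiver.Symmetrify V) (w : Quiver.Path a a),
    walkIn T w → ReducedWalk w → w = Quiver.Path.nil

/-- A maximal tree in the underlying graph of `Q`: an acyclic set of arrows, maximal with
this property. -/
def IsMaximalTree (T : Set (ArrowSig V)) : Prop :=
  AcyclicArrowSet T ∧ ∀ e : ArrowSig V, e ∉ T → ¬ AcyclicArrowSet (insert e T)

section CoveringMorphisms

variable {W : Type} [Quiver.{0} W]

/-- A covering morphism of bound quivers `p : (Q̂, Î) → (Q, I)`. -/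
structure IsCoveringMorphism (p : W ⥤q V) (Jhat : PathIdeal k W) (J : PathIdeal k V) :
    Prop where
  surj : Function.Surjective p.obj
  bij_out : ∀ x : W, Function.Bijective
    (fun g : Σ y : W, x ⟶ y => (⟨p.obj g.1, p.map g.2⟩ : Σ y : V, p.obj x ⟶ y))
  bij_in : ∀ x : W, Function.Bijective
    (fun g : Σ y : W, y ⟶ x => (⟨p.obj g.1, p.map g.2⟩ : Σ y : V, y ⟶ p.obj x))
  maps_ideal : ∀ {x y : W}, ∀ ρ ∈ Jhat.I x y,
    Finsupp.mapDomain p.mapPath ρ ∈ J.I (p.obj x) (p.obj y)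
  lifts_rel : ∀ (x : W) (y : V) (ρ : PathVec k (p.obj x) y), ρ ∈ J.I (p.obj x) y →
    ∃ (yhat : W) (h : p.obj yhat = y) (ρhat : PathVec k x yhat),
      ρhat ∈ Jhat.I x yhat ∧
        Finsupp.mapDomain p.mapPath ρhat = cast (by rw [h]) ρ

/-- The functor between path categories induced by a morphism of quivers. -/
def pathsFunctor (p : W ⥤q V) : Paths W ⥤ Paths V where
  obj := p.obj
  map := p.mapPath
  map_id _ := rfl
  map_comp f g := p.mapPath_comp f g

/-- `φ` is the simplicial map induced by `p` between the simplicial models of the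
classifying spaces: it sends the cell determined by a chain of paths `F` upstairs to the
cell determined by the image chain `F ⋙ p` downstairs. -/
def IsInducedSSetMap (p : W ⥤q V) (Jhat : PathIdeal k W) (J : PathIdeal k V)
    (rhat : HomRel (Paths W)) (r : HomRel (Paths V))
    (φ : BSSet Jhat rhat ⟶ BSSet J r) : Prop :=
  ∀ (Δ : SimplexCategoryᵒᵖ) (F : ComposableArrows (Paths W) (Δ.unop.len))
    (hF : NonzeroChain Jhat F),
    (φ.app Δ ⟨F ⋙ CategoryTheory.Quotient.functor rhat, ⟨F, hF, rfl⟩⟩).val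
      = (F ⋙ pathsFunctor p) ⋙ CategoryTheory.Quotient.functor r

end CoveringMorphisms

section Deck

/-- The group of covering (deck) transformations of a map `f : X → Y`: homeomorphisms
`φ` of `X` with `f ∘ φ = f`. -/
def Deck {X Y : TopCat} (f : X ⟶ Y) : Type :=
  {φ : X ≃ₜ X // ∀ x : X, f (φ x) = f x}

noncomputable instance {X Y : TopCat} (f : X ⟶ Y) : Group (Deck f) where
  one := ⟨Homeomorph.refl _, fun _ => rfl⟩
  mul φ ψ := ⟨ψ.1.trans φ.1, fun x => (φ.2 _).trans (ψ.2 x)⟩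
  inv φ := ⟨φ.1.symm, fun x =>
    (φ.2 (φ.1.symm x)).symm.trans (congrArg f (φ.1.apply_symm_apply x))⟩
  mul_assoc a b c := Subtype.ext (Homeomorph.ext fun _ => rfl)
  one_mul a := Subtype.ext (Homeomorph.ext fun _ => rfl)
  mul_one a := Subtype.ext (Homeomorph.ext fun _ => rfl)
  inv_mul_cancel a := Subtype.ext (Homeomorph.ext fun x => a.1.symm_apply_apply x)

/-- The group homomorphism `f_* : π₁(X, x) → π₁(Y, f x)` induced by a continuous map. -/
noncomputable def inducedPiOne {X Y : TopCat} (f : X ⟶ Y) (x : X) :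
    FundamentalGroup X x →* FundamentalGroup Y (f x) :=
  (FundamentalGroupoid.fundamentalGroupoidFunctor.map f).mapEnd
    (FundamentalGroupoid.mk x)

/-- A covering map `f : X → Y` is regular if the image of `f_* : π₁(X,x) → π₁(Y, f x)` is
a normal subgroup. -/
noncomputable def IsRegularCovering {X Y : TopCat} (f : X ⟶ Y) (x : X) : Prop :=
  ((inducedPiOne f x).range).Normal

end Deck

section Subquivers

/-- The full subquiver on a set `S` of vertices. -/
instance setQuiver (S : Set V) : Quiver.{0} S :=
  ⟨fun a b => ((a : V) ⟶ (b : V))⟩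

/-- The inclusion of a full subquiver. -/
def setIncl (S : Set V) : (S : Type) ⥤q V :=
  ⟨Subtype.val, fun f => f⟩

/-- The vertices visited by a path. -/
def pathVerts : ∀ {a b : V}, Quiver.Path a b → Set V
  | a, _, Quiver.Path.nil => {a}
  | _, b, Quiver.Path.cons p _ => insert b (pathVerts p)

/-- `S` is convex: any path between vertices of `S` stays in `S`. -/
def ConvexSet (S : Set V) : Prop :=
  ∀ {a b : V} (p : Quiver.Path a b), a ∈ S → b ∈ S → pathVerts p ⊆ S

lemma pathVecComp_single_left {a b c : V} (p : Quiver.Path a b) (ρ : PathVec k b c) :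
    pathVecComp (Finsupp.single p 1) ρ = ρ.mapDomain (fun q => p.comp q) := by
  unfold pathVecComp
  rw [Finsupp.sum_single_index]
  · simp [Finsupp.mapDomain]
  · simp

lemma pathVecComp_single_right {a b c : V} (q : Quiver.Path b c) (ρ : PathVec k a b) :
    pathVecComp ρ (Finsupp.single q 1) = ρ.mapDomain (fun p => p.comp q) := by
  unfold pathVecComp
  rw [Finsupp.mapDomain]
  apply Finsupp.sum_congr
  intro p _
  rw [Finsupp.sum_single_index]
  · rw [mul_one]
  · simp

/-- The restriction `I ∩ kQ'` of the ideal `I` to a full subquiver. -/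
noncomputable def restrictIdeal (J : PathIdeal k V) (S : Set V) : PathIdeal k S where
  I a b := (J.I a.val b.val).comap (Finsupp.lmapDomain k k ((setIncl S).mapPath))
  comp_single_left := by
    intro a b c p ρ hρ
    replace hρ : Finsupp.mapDomain ((setIncl S).mapPath) ρ ∈ J.I b.val c.val := hρ
    show Finsupp.mapDomain ((setIncl S).mapPath)
      (pathVecComp (Finsupp.single p 1) ρ) ∈ J.I a.val c.val
    rw [pathVecComp_single_left, ← Finsupp.mapDomain_comp]
    have he : ((setIncl S).mapPath ∘ fun q : Quiver.Path b c => p.comp q)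
        = (fun q : Quiver.Path ((setIncl S).obj b) ((setIncl S).obj c) =>
            ((setIncl S).mapPath p).comp q) ∘ (setIncl S).mapPath := by
      funext q
      exact (setIncl S).mapPath_comp p q
    rw [he, Finsupp.mapDomain_comp, ← pathVecComp_single_left]
    exact J.comp_single_left _ hρ
  comp_single_right := by
    intro a b c q ρ hρ
    replace hρ : Finsupp.mapDomain ((setIncl S).mapPath) ρ ∈ J.I a.val b.val := hρ
    show Finsupp.mapDomain ((setIncl S).mapPath)
      (pathVecComp ρ (Finsupp.single q 1)) ∈ J.I a.val c.val
    rw [pathVecComp_single_right, ← Finsupp.mapDomain_comp]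
    have he : ((setIncl S).mapPath ∘ fun p : Quiver.Path a b => p.comp q)
        = (fun p : Quiver.Path ((setIncl S).obj a) ((setIncl S).obj b) =>
            p.comp ((setIncl S).mapPath q)) ∘ (setIncl S).mapPath := by
      funext p
      exact (setIncl S).mapPath_comp p q
    rw [he, Finsupp.mapDomain_comp, ← pathVecComp_single_right]
    exact J.comp_single_right _ hρ

/-- The walk in `Q` underlying a walk in a subquiver of `Q`. -/
def mapWalkOfSet (S : Set V) {a b : S} (w : Quiver.Path (Quiver.Symmetrify.of.obj a) (Quiver.Symmetrify.of.obj b)) :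
    Quiver.Path (Quiver.Symmetrify.of.obj (a : V)) (Quiver.Symmetrify.of.obj (b : V)) :=
  ((setIncl S).symmetrify).mapPath w

end Subquivers

end BoundQuiver

end Coverings
namespace BoundQuiver

open CategoryTheory

section AuxCovering

variable {k : Type} [Field k] {V : Type} [Quiver.{0} V] {W : Type} [Quiver.{0} W]

lemma cast_tt {α : Sort*} (h : α = α) (x : α) : cast h x = x := eq_of_heq (cast_heq h x)

lemma sigma_snd {A : Type*} {B : A → Type*} {a : A} {x y : B a}
    (h : (⟨a, x⟩ : Σ i, B i) = ⟨a, y⟩) : x = y :=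
  eq_of_heq (Sigma.mk.inj_iff.mp h).2

/-- Forgetting the last arrow of a path (bundled with its target). -/
def dropLastS {X : Type} [Quiver.{0} X] {x : X} :
    (Σ y : X, Quiver.Path x y) → (Σ y : X, Quiver.Path x y)
  | ⟨_, Quiver.Path.nil⟩ => ⟨x, Quiver.Path.nil⟩
  | ⟨_, Quiver.Path.cons q _⟩ => ⟨_, q⟩

/-- The last arrow of a path, if any. -/
def lastArrowS {X : Type} [Quiver.{0} X] {x : X} :
    (Σ y : X, Quiver.Path x y) → Option (Σ a b : X, a ⟶ b)
  | ⟨_, Quiver.Path.nil⟩ => none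
  | ⟨y, @Quiver.Path.cons _ _ _ c _ _ g⟩ => some ⟨c, y, g⟩

lemma pathLift_injective (p : W ⥤q V)
    (hb : ∀ x : W, Function.Injective
      (fun g : Σ y : W, x ⟶ y => (⟨p.obj g.1, p.map g.2⟩ : Σ y : V, p.obj x ⟶ y)))
    (xhat : W) : Function.Injective
      (fun s : Σ y : W, Quiver.Path xhat y =>
        (⟨p.obj s.1, p.mapPath s.2⟩ : Σ y : V, Quiver.Path (p.obj xhat) y)) := by
  rintro ⟨a, u⟩ ⟨b, v⟩ h
  dsimp at h
  induction u generalizing b v with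
  | nil =>
    cases v with
    | nil => rfl
    | cons v₀ g =>
      have := congrArg (fun t : Σ y : V, Quiver.Path (p.obj xhat) y => t.2.length) h
      simp [Prefunctor.mapPath] at this
  | cons u₀ f ih =>
    cases v with
    | nil =>
      have := congrArg (fun t : Σ y : V, Quiver.Path (p.obj xhat) y => t.2.length) h
      simp [Prefunctor.mapPath] at this
    | cons v₀ g =>
      have h1 := congrArg dropLastS h
      simp only [Prefunctor.mapPath, dropLastS] at h1
      have h2 := ih _ _ h1
      obtain ⟨he, hu⟩ := Sigma.mk.inj_iff.mp h2
      subst he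
      rw [heq_eq_eq] at hu
      subst hu
      have h3 := congrArg lastArrowS h
      simp only [Prefunctor.mapPath, lastArrowS, Option.some.injEq] at h3
      have h4 := sigma_snd h3
      have h5 : (⟨_, f⟩ : Σ y : W, _ ⟶ y) = ⟨_, g⟩ := hb _ h4
      obtain ⟨hab, hfg⟩ := Sigma.mk.inj_iff.mp h5
      subst hab
      rw [heq_eq_eq] at hfg
      subst hfg
      rfl

lemma pathLift_surjective (p : W ⥤q V)
    (hb : ∀ x : W, Function.Surjective
      (fun g : Σ y : W, x ⟶ y => (⟨p.obj g.1, p.map g.2⟩ : Σ y : V, p.obj x ⟶ y)))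
    (xhat : W) : Function.Surjective
      (fun s : Σ y : W, Quiver.Path xhat y =>
        (⟨p.obj s.1, p.mapPath s.2⟩ : Σ y : V, Quiver.Path (p.obj xhat) y)) := by
  rintro ⟨y, w⟩
  induction w with
  | nil => exact ⟨⟨xhat, Quiver.Path.nil⟩, rfl⟩
  | cons w₀ f ih =>
    obtain ⟨⟨c, u₀⟩, hu⟩ := ih
    dsimp at hu
    have hc := congrArg Sigma.fst hu
    dsimp at hc
    subst hc
    have hu' := sigma_snd hu
    obtain ⟨⟨d, g⟩, hg⟩ := hb c ⟨_, f⟩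
    dsimp at hg
    have hd := congrArg Sigma.fst hg
    dsimp at hd
    subst hd
    have hg' := sigma_snd hg
    refine ⟨⟨d, u₀.cons g⟩, ?_⟩
    dsimp [Prefunctor.mapPath]
    rw [hu', hg']

lemma mapPathFix_injective (p : W ⥤q V)
    (hb : ∀ x : W, Function.Injective
      (fun g : Σ y : W, x ⟶ y => (⟨p.obj g.1, p.map g.2⟩ : Σ y : V, p.obj x ⟶ y)))
    (xhat yhat : W) :
    Function.Injective (fun w : Quiver.Path xhat yhat => p.mapPath w) := by
  intro u v h
  dsimp at h
  have h2 : (⟨p.obj yhat, p.mapPath u⟩ : Σ y : V, Quiver.Path (p.obj xhat) y)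
      = ⟨p.obj yhat, p.mapPath v⟩ := by rw [h]
  exact sigma_snd (pathLift_injective p hb xhat h2)

open scoped Classical in
lemma restrictVec_apply {a b : V} (ρ : PathVec k a b) (s : Finset (Quiver.Path a b))
    (q : Quiver.Path a b) : restrictVec ρ s q = if q ∈ s then ρ q else 0 := by
  classical
  rw [restrictVec, Finsupp.finset_sum_apply]
  simp only [Finsupp.single_apply]
  rw [Finset.sum_ite_eq' s q]

lemma restrictVec_support {a b : V} {ρ : PathVec k a b} {s : Finset (Quiver.Path a b)}
    (h : s ⊆ ρ.support) : (restrictVec ρ s).support = s := by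
  ext q
  simp only [Finsupp.mem_support_iff, restrictVec_apply]
  constructor
  · intro hq
    by_contra hqs
    simp [hqs] at hq
  · intro hq
    simp only [hq, if_true]
    exact Finsupp.mem_support_iff.mp (h hq)

open scoped Classical in
lemma mapDomain_restrictVec {a b : W} {a' b' : V}
    (φ : Quiver.Path a b → Quiver.Path a' b') (hφ : Function.Injective φ)
    (ρ : PathVec k a b) (s : Finset (Quiver.Path a b)) :
    Finsupp.mapDomain φ (restrictVec ρ s)
      = restrictVec (Finsupp.mapDomain φ ρ) (s.image φ) := by
  classical
  rw [restrictVec, restrictVec, Finsupp.mapDomain_finset_sum,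
    Finset.sum_image (fun x _ y _ h => hφ h)]
  refine Finset.sum_congr rfl fun q _ => ?_
  rw [Finsupp.mapDomain_single, Finsupp.mapDomain_apply hφ]

open scoped Classical in
lemma lift_minimal (p : W ⥤q V) (Jhat : PathIdeal k W) (J : PathIdeal k V)
    (hcov : IsCoveringMorphism p Jhat J) (xhat : W) {b : V}
    {ρ : PathVec k (p.obj xhat) b} (hmin : IsMinimalRelation J ρ) :
    ∃ (yhat : W) (ρhat : PathVec k xhat yhat), IsMinimalRelation Jhat ρhat ∧
      ∀ q ∈ ρ.support, ∃ qhat ∈ ρhat.support,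
        (⟨p.obj yhat, p.mapPath qhat⟩ : Σ y : V, Quiver.Path (p.obj xhat) y) = ⟨b, q⟩ := by
  obtain ⟨yhat, h, ρhat, hmem, heq⟩ := hcov.lifts_rel xhat b ρ hmin.mem
  subst h
  rw [cast_tt] at heq
  have hφ : Function.Injective (fun w : Quiver.Path xhat yhat => p.mapPath w) :=
    mapPathFix_injective p (fun x => (hcov.bij_out x).1) xhat yhat
  have hsupp : ρ.support = ρhat.support.image (fun w => p.mapPath w) := by
    rw [← heq, Finsupp.mapDomain_support_of_injective hφ]
  refine ⟨yhat, ρhat, ⟨hmem, ?_, ?_⟩, ?_⟩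
  · have := hmin.two_le_card
    rwa [hsupp, Finset.card_image_of_injective _ hφ] at this
  · intro s' hsub hne hneq hmem'
    refine hmin.minimal (s'.image (fun w => p.mapPath w)) ?_ ?_ ?_ ?_
    · rw [hsupp]; exact Finset.image_subset_image hsub
    · exact hne.image _
    · rw [hsupp]
      intro hc
      exact hneq (Finset.image_injective hφ hc)
    · have := hcov.maps_ideal _ hmem'
      rwa [mapDomain_restrictVec _ hφ, heq] at this
  · intro q hq
    rw [hsupp] at hq
    obtain ⟨qhat, hqhat, hq'⟩ := Finset.mem_image.mp hq
    exact ⟨qhat, hqhat, by rw [hq']⟩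

open scoped Classical in
lemma push_minimal (p : W ⥤q V) (Jhat : PathIdeal k W) (J : PathIdeal k V)
    (hcov : IsCoveringMorphism p Jhat J) {xhat yhat : W}
    {ρhat : PathVec k xhat yhat} (hmin : IsMinimalRelation Jhat ρhat) :
    IsMinimalRelation J (Finsupp.mapDomain (p.mapPath) ρhat) := by
  have hφ : Function.Injective (fun w : Quiver.Path xhat yhat => p.mapPath w) :=
    mapPathFix_injective p (fun x => (hcov.bij_out x).1) xhat yhat
  have hsupp : (Finsupp.mapDomain (p.mapPath) ρhat).support
      = ρhat.support.image (fun w => p.mapPath w) :=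
    Finsupp.mapDomain_support_of_injective hφ _
  refine ⟨hcov.maps_ideal _ hmin.mem, ?_, ?_⟩
  · rw [hsupp, Finset.card_image_of_injective _ hφ]
    exact hmin.two_le_card
  · intro s hsub hne hneq hmemJ
    obtain ⟨yhat', h, ρ', hρ'mem, heq⟩ := hcov.lifts_rel xhat (p.obj yhat) _ hmemJ
    have hsig : (⟨p.obj yhat', Finsupp.mapDomain (p.mapPath) ρ'⟩ :
        Σ y : V, PathVec k (p.obj xhat) y)
        = ⟨p.obj yhat, restrictVec (Finsupp.mapDomain (p.mapPath) ρhat) s⟩ :=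
      Sigma.ext h (heq ▸ cast_heq _ _)
    have hssub : s ⊆ (Finsupp.mapDomain (p.mapPath) ρhat).support := hsub
    -- ρ' has nonempty support
    have hcards := congrArg
      (fun t : Σ y : V, PathVec k (p.obj xhat) y => t.2.support.card) hsig
    dsimp at hcards
    rw [restrictVec_support hssub] at hcards
    have hφ' : Function.Injective (fun w : Quiver.Path xhat yhat' => p.mapPath w) :=
      mapPathFix_injective p (fun x => (hcov.bij_out x).1) xhat yhat'
    have hsupp' : (Finsupp.mapDomain (p.mapPath) ρ').support
        = ρ'.support.image (fun w => p.mapPath w) :=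
      Finsupp.mapDomain_support_of_injective hφ' _
    have hne' : ρ'.support.Nonempty := by
      rw [← Finset.card_pos]
      have : (Finsupp.mapDomain (p.mapPath) ρ').support.card = ρ'.support.card := by
        rw [hsupp', Finset.card_image_of_injective _ hφ']
      have hp := Finset.card_pos.mpr hne
      omega
    obtain ⟨q, hq⟩ := hne'
    -- transfer membership through hsig
    have hms := congrArg
      (fun t : Σ y : V, PathVec k (p.obj xhat) y =>
        t.2.support.image (fun w => (⟨t.1, w⟩ : Σ y : V, Quiver.Path (p.obj xhat) y))) hsig
    dsimp at hms
    have hqmem : (⟨p.obj yhat', p.mapPath q⟩ : Σ y : V, Quiver.Path (p.obj xhat) y)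
        ∈ (Finsupp.mapDomain (p.mapPath) ρ').support.image
          (fun w => (⟨p.obj yhat', w⟩ : Σ y : V, Quiver.Path (p.obj xhat) y)) := by
      refine Finset.mem_image.mpr ⟨p.mapPath q, ?_, rfl⟩
      rw [hsupp']
      exact Finset.mem_image.mpr ⟨q, hq, rfl⟩
    rw [hms] at hqmem
    obtain ⟨w, hw, hweq⟩ := Finset.mem_image.mp hqmem
    rw [restrictVec_support hssub] at hw
    have hwsupp := hssub hw
    rw [hsupp] at hwsupp
    obtain ⟨q₀, hq₀, hq₀eq⟩ := Finset.mem_image.mp hwsupp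
    have hyy : yhat' = yhat := by
      have hl := pathLift_injective p (fun x => (hcov.bij_out x).1) xhat
        (a₁ := ⟨yhat', q⟩) (a₂ := ⟨yhat, q₀⟩) (by dsimp; rw [hweq.symm, hq₀eq])
      exact congrArg Sigma.fst hl
    subst yhat'
    rw [cast_tt] at heq
    -- now identify ρ' with a restriction of ρhat
    set s' : Finset (Quiver.Path xhat yhat) := s.preimage _ (hφ.injOn) with hs'
    have himg : s'.image (fun w => p.mapPath w) = s := by
      ext w
      simp only [hs', Finset.mem_image, Finset.mem_preimage]
      constructor
      · rintro ⟨u, hu, rfl⟩; exact hu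
      · intro hw'
        have := hssub hw'
        rw [hsupp] at this
        obtain ⟨u, hu, rfl⟩ := Finset.mem_image.mp this
        exact ⟨u, hw', rfl⟩
    have hρ'eq : ρ' = restrictVec ρhat s' := by
      apply Finsupp.mapDomain_injective hφ
      rw [heq, mapDomain_restrictVec _ hφ, himg]
    refine hmin.minimal s' ?_ ?_ ?_ (hρ'eq ▸ hρ'mem)
    · intro u hu
      have : p.mapPath u ∈ s := Finset.mem_preimage.mp hu
      have h2 := hssub this
      rw [hsupp] at h2
      obtain ⟨u', hu', he⟩ := Finset.mem_image.mp h2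
      rwa [← hφ he]
    · obtain ⟨w0, hw0⟩ := hne
      have h2 := hssub hw0
      rw [hsupp] at h2
      obtain ⟨u, hu, rfl⟩ := Finset.mem_image.mp h2
      exact ⟨u, Finset.mem_preimage.mpr hw0⟩
    · intro hc
      apply hneq
      rw [← himg, hc, ← hsupp]


lemma natHomotopicS_symm {J : PathIdeal k V} {s t : Σ a b : V, Quiver.Path a b}
    (h : NatHomotopicS J s t) : NatHomotopicS J t s := by
  obtain ⟨a1, b1, x⟩ := s
  obtain ⟨a2, b2, y⟩ := t
  obtain ⟨h1, h2, hh⟩ := h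
  dsimp at h1 h2 hh
  subst h1; subst h2
  rw [cast_tt] at hh
  exact ⟨rfl, rfl, by rw [cast_tt]; exact hh.symm⟩

lemma natHomotopicS_trans {J : PathIdeal k V} {s t u : Σ a b : V, Quiver.Path a b}
    (h : NatHomotopicS J s t) (h' : NatHomotopicS J t u) : NatHomotopicS J s u := by
  obtain ⟨a1, b1, x⟩ := s
  obtain ⟨a2, b2, y⟩ := t
  obtain ⟨a3, b3, z⟩ := u
  obtain ⟨h1, h2, hh⟩ := h
  dsimp at h1 h2 hh
  subst h1; subst h2
  rw [cast_tt] at hh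
  obtain ⟨g1, g2, gg⟩ := h'
  dsimp at g1 g2 gg
  subst g1; subst g2
  rw [cast_tt] at gg
  exact ⟨rfl, rfl, by rw [cast_tt]; exact hh.trans gg⟩

open scoped Classical in
lemma push_natHomotopic (p : W ⥤q V) (Jhat : PathIdeal k W) (J : PathIdeal k V)
    (hcov : IsCoveringMorphism p Jhat J) {a b : W} {u v : Quiver.Path a b}
    (h : NatHomotopic Jhat u v) : NatHomotopic J (p.mapPath u) (p.mapPath v) := by
  induction h with
  | minrel hρ hp hq =>
    rename_i a' b' ρ pp qq
    have hφ : Function.Injective (fun w : Quiver.Path a' b' => p.mapPath w) :=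
      mapPathFix_injective p (fun x => (hcov.bij_out x).1) a' b'
    refine NatHomotopic.minrel (push_minimal p Jhat J hcov hρ) ?_ ?_ <;>
      rw [Finsupp.mapDomain_support_of_injective hφ]
    · exact Finset.mem_image_of_mem _ hp
    · exact Finset.mem_image_of_mem _ hq
  | comp w w' hnat ih =>
    simp only [Prefunctor.mapPath_comp]
    exact NatHomotopic.comp _ _ ih
  | refl q => exact NatHomotopic.refl _
  | symm _ ih => exact ih.symm
  | trans _ _ ih1 ih2 => exact ih1.trans ih2

lemma forward_natHomotopic (p : W ⥤q V) (Jhat : PathIdeal k W) (J : PathIdeal k V)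
    (hcov : IsCoveringMorphism p Jhat J) {a b : V} {w₁ w₂ : Quiver.Path a b}
    (h : NatHomotopic J w₁ w₂) :
    ∀ (xhat : W) {y₁ y₂ : W} (u₁ : Quiver.Path xhat y₁) (u₂ : Quiver.Path xhat y₂),
      (⟨p.obj xhat, p.obj y₁, p.mapPath u₁⟩ : Σ a b : V, Quiver.Path a b) = ⟨a, b, w₁⟩ →
      (⟨p.obj xhat, p.obj y₂, p.mapPath u₂⟩ : Σ a b : V, Quiver.Path a b) = ⟨a, b, w₂⟩ →
      NatHomotopicS Jhat ⟨xhat, y₁, u₁⟩ ⟨xhat, y₂, u₂⟩ := by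
  have hinj := fun xhat => pathLift_injective p (fun x => (hcov.bij_out x).1) xhat
  have hsurj := fun xhat => pathLift_surjective p (fun x => (hcov.bij_out x).2) xhat
  induction h with
  | minrel hρ hp hq =>
    rename_i a' b' ρ pp qq
    intro xhat y₁ y₂ u₁ u₂ H1 H2
    have ha := congrArg Sigma.fst H1
    dsimp at ha
    subst ha
    have H1' := sigma_snd H1
    have hb := congrArg Sigma.fst H1'
    dsimp at hb
    subst hb
    have H2' := sigma_snd H2
    obtain ⟨yhat, ρhat, hminhat, hlift⟩ := lift_minimal p Jhat J hcov xhat hρ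
    obtain ⟨phat, hphat, hpeq⟩ := hlift pp hp
    obtain ⟨qhat, hqhat, hqeq⟩ := hlift qq hq
    have e1 : (⟨y₁, u₁⟩ : Σ y : W, Quiver.Path xhat y) = ⟨yhat, phat⟩ := by
      apply hinj xhat
      dsimp
      rw [hpeq]
      exact H1'
    obtain ⟨hy1, hu1⟩ := Sigma.mk.inj_iff.mp e1
    subst hy1
    rw [heq_eq_eq] at hu1
    subst hu1
    have e2 : (⟨y₂, u₂⟩ : Σ y : W, Quiver.Path xhat y) = ⟨y₁, qhat⟩ := by
      apply hinj xhat
      dsimp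
      rw [hqeq]
      exact H2'
    obtain ⟨hy2, hu2⟩ := Sigma.mk.inj_iff.mp e2
    subst hy2
    rw [heq_eq_eq] at hu2
    subst hu2
    exact ⟨rfl, rfl, by rw [cast_tt]; exact NatHomotopic.minrel hminhat hphat hqhat⟩
  | comp w w' hnat ih =>
    rename_i pp qq
    intro xhat y₁ y₂ u₁ u₂ H1 H2
    have ha := congrArg Sigma.fst H1
    dsimp at ha
    subst ha
    have H1' := sigma_snd H1
    have H2' := sigma_snd H2
    obtain ⟨⟨bhat, what⟩, hw⟩ := hsurj xhat ⟨_, w⟩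
    dsimp at hw
    have hb := congrArg Sigma.fst hw
    dsimp at hb
    subst hb
    have hw' := sigma_snd hw
    obtain ⟨⟨chat, phat⟩, hp⟩ := hsurj bhat ⟨_, pp⟩
    dsimp at hp
    have hc := congrArg Sigma.fst hp
    dsimp at hc
    subst hc
    have hp' := sigma_snd hp
    obtain ⟨⟨chat₂, qhat⟩, hq⟩ := hsurj bhat ⟨_, qq⟩
    dsimp at hq
    obtain ⟨⟨dhat, what'⟩, hw2⟩ := hsurj chat ⟨_, w'⟩
    dsimp at hw2
    have hd := congrArg Sigma.fst hw2
    dsimp at hd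
    subst hd
    have hw2' := sigma_snd hw2
    have S := ih bhat phat qhat (by rw [hp']) (congrArg
      (fun t : Σ y : V, Quiver.Path (p.obj bhat) y =>
        (⟨p.obj bhat, t⟩ : Σ a b : V, Quiver.Path a b)) hq)
    obtain ⟨h11, hcc, hh⟩ := S
    dsimp at hcc hh
    subst hcc
    rw [cast_tt] at hh
    have hq' := sigma_snd hq
    have hL1 : p.mapPath ((what.comp phat).comp what') = (w.comp pp).comp w' := by
      rw [Prefunctor.mapPath_comp, Prefunctor.mapPath_comp, hw', hp', hw2']
    have hL2 : p.mapPath ((what.comp qhat).comp what') = (w.comp qq).comp w' := by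
      rw [Prefunctor.mapPath_comp, Prefunctor.mapPath_comp, hw', hq', hw2']
    have e1 : (⟨y₁, u₁⟩ : Σ y : W, Quiver.Path xhat y)
        = ⟨dhat, (what.comp phat).comp what'⟩ := by
      apply hinj xhat
      dsimp
      rw [hL1]
      exact H1'
    obtain ⟨hy1, hu1⟩ := Sigma.mk.inj_iff.mp e1
    subst hy1
    rw [heq_eq_eq] at hu1
    subst hu1
    have e2 : (⟨y₂, u₂⟩ : Σ y : W, Quiver.Path xhat y)
        = ⟨y₁, (what.comp qhat).comp what'⟩ := by
      apply hinj xhat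
      dsimp
      rw [hL2]
      exact H2'
    obtain ⟨hy2, hu2⟩ := Sigma.mk.inj_iff.mp e2
    subst hy2
    rw [heq_eq_eq] at hu2
    subst hu2
    exact ⟨rfl, rfl, by rw [cast_tt]; exact NatHomotopic.comp what what' hh⟩
  | refl q =>
    intro xhat y₁ y₂ u₁ u₂ H1 H2
    have ha := congrArg Sigma.fst H1
    dsimp at ha
    subst ha
    have H1' := sigma_snd H1
    have H2' := sigma_snd H2
    have e : (⟨y₁, u₁⟩ : Σ y : W, Quiver.Path xhat y) = ⟨y₂, u₂⟩ := by
      apply hinj xhat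
      dsimp
      rw [H1', H2']
    obtain ⟨hy, hu⟩ := Sigma.mk.inj_iff.mp e
    subst hy
    rw [heq_eq_eq] at hu
    subst hu
    exact ⟨rfl, rfl, by rw [cast_tt]; exact NatHomotopic.refl _⟩
  | symm _ ih =>
    intro xhat y₁ y₂ u₁ u₂ H1 H2
    exact natHomotopicS_symm (ih xhat u₂ u₁ H2 H1)
  | trans _ _ ih1 ih2 =>
    rename_i pp qq rr _ _
    intro xhat y₁ y₂ u₁ u₂ H1 H2
    have ha := congrArg Sigma.fst H1
    dsimp at ha
    subst ha
    have H1' := sigma_snd H1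
    have hb := congrArg Sigma.fst H1'
    dsimp at hb
    subst hb
    obtain ⟨⟨mhat, qhat⟩, hq⟩ := hsurj xhat ⟨_, qq⟩
    dsimp at hq
    have T := congrArg
      (fun t : Σ y : V, Quiver.Path (p.obj xhat) y =>
        (⟨p.obj xhat, t⟩ : Σ a b : V, Quiver.Path a b)) hq
    exact natHomotopicS_trans (ih1 xhat u₁ qhat H1 T) (ih2 xhat qhat u₂ T H2)


end AuxCovering

/-- (Lemma 4.1) Let `p : (Q̂,Î) → (Q,I)` be a covering morphism of bound
quivers, `w₁, w₂` two paths with source `x` and `ŵ₁, ŵ₂` lifts with source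
`x̂ ∈ p⁻¹(x)`.  Then `w₁ ∼∘ w₂` if and only if `ŵ₁ ∼∘ ŵ₂`. -/
theorem natHomotopic_iff_natHomotopic_lift
    {k : Type} [Field k] {V : Type} [Quiver.{0} V] {W : Type} [Quiver.{0} W]
    (p : W ⥤q V) (Jhat : PathIdeal k W) (J : PathIdeal k V)
    (hJhat : Jhat.IsAdmissible) (hJ : J.IsAdmissible)
    (hcov : IsCoveringMorphism p Jhat J)
    {x y : V} (w₁ w₂ : Quiver.Path x y)
    (xhat : W) (hx : p.obj xhat = x)
    {y₁ y₂ : W} (w₁hat : Quiver.Path xhat y₁) (w₂hat : Quiver.Path xhat y₂)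
    (h₁ : (⟨p.obj xhat, p.obj y₁, p.mapPath w₁hat⟩ : Σ a b : V, Quiver.Path a b)
      = ⟨x, y, w₁⟩)
    (h₂ : (⟨p.obj xhat, p.obj y₂, p.mapPath w₂hat⟩ : Σ a b : V, Quiver.Path a b)
      = ⟨x, y, w₂⟩) :
    NatHomotopic J w₁ w₂ ↔
      NatHomotopicS Jhat ⟨xhat, y₁, w₁hat⟩ ⟨xhat, y₂, w₂hat⟩ := by
  constructor
  · intro h
    exact forward_natHomotopic p Jhat J hcov h xhat w₁hat w₂hat h₁ h₂
  · intro hS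
    have hax := congrArg Sigma.fst h₁
    dsimp at hax
    subst hax
    have h₁' := sigma_snd h₁
    have hby := congrArg Sigma.fst h₁'
    dsimp at hby
    subst hby
    have h₁'' := sigma_snd h₁'
    obtain ⟨g1, hy, hh⟩ := hS
    dsimp at hy hh
    subst hy
    rw [cast_tt] at hh
    have h₂' := sigma_snd h₂
    have h₂'' := sigma_snd h₂'
    have hpush := push_natHomotopic p Jhat J hcov hh
    rwa [h₁'', h₂''] at hpush

end BoundQuiver
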